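/- arXiv:2201.02059 — 2 statements merged into one kernel-verified Lean document; each statement's English description precedes it below -/
import Mathlib

section
/- Let F ⊆ ℝ^d be a non-empty compact set, let Φ = {φ_i}_{i∈Λ} be a similarity IFS which satisfies the open set condition, and let T ∈ 𝒯'_Λ be a tree with no leaves such that F = Γ_Φ(T). Suppose S ∈ cl(S_Φ^T) and ψ is a similarity map such that ψ⁻¹(Q) ∩ S ⊆ U for some OSC set U. Then there exist finitely many microsets A_1, …, A_k of F and similarity maps χ_1, …, χ_k such that Q ∩ ψ(S) = ⋃_{j=1}^k χ_j(A_j). -/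
open Metric Filter Set
open scoped ENNReal NNReal

noncomputable section

abbrev Euc (d : ℕ) : Type := EuclideanSpace ℝ (Fin d)

/-- `f : ℝ^d → ℝ^d` is a similarity with scaling ratio `r`. -/
def IsSimilarityWithRatio {d : ℕ} (f : Euc d → Euc d) (r : ℝ) : Prop :=
  ∀ x y : Euc d, dist (f x) (f y) = r * dist x y

/-- `f` is a similarity map (with some positive scaling ratio). -/
def IsSimilarity {d : ℕ} (f : Euc d → Euc d) : Prop :=
  ∃ r : ℝ, 0 < r ∧ IsSimilarityWithRatio f r

/-- `f` is an expanding similarity map (scaling ratio `≥ 1`). -/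
def IsExpandingSimilarity {d : ℕ} (f : Euc d → Euc d) : Prop :=
  ∃ r : ℝ, 1 ≤ r ∧ IsSimilarityWithRatio f r

/-- `f` is a contracting similarity map with ratio `r ∈ (0,1)`. -/
def IsContractingSimilarity {d : ℕ} (f : Euc d → Euc d) (r : ℝ) : Prop :=
  0 < r ∧ r < 1 ∧ IsSimilarityWithRatio f r

/-- The closed unit cube `Q = [0,1]^d`. -/
def unitCube (d : ℕ) : Set (Euc d) := {x | ∀ i, x i ∈ Set.Icc (0:ℝ) 1}

/-- A miniset of `F`: a non-empty set of the form `Q ∩ ψ(F)` with `ψ` an expanding similarity. -/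
def IsMiniset {d : ℕ} (F M : Set (Euc d)) : Prop :=
  M.Nonempty ∧ ∃ ψ : Euc d → Euc d, IsExpandingSimilarity ψ ∧ M = unitCube d ∩ ψ '' F

/-- A microset of `F`: a limit of minisets of `F` in the Hausdorff metric. -/
def IsMicroset {d : ℕ} (F M : Set (Euc d)) : Prop :=
  IsCompact M ∧ M.Nonempty ∧ ∃ A : ℕ → Set (Euc d), (∀ n, IsMiniset F (A n)) ∧
    Tendsto (fun n => hausdorffDist (A n) M) atTop (nhds 0)

/-- A tree with alphabet `Λ`: a prefix-closed set of finite words containing the empty word. -/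
def IsTree {Λ : Type} (T : Set (List Λ)) : Prop :=
  ([] : List Λ) ∈ T ∧ ∀ w ∈ T, ∀ v : List Λ, v <+: w → v ∈ T

/-- Every word of `T` has a one-letter extension in `T`. -/
def HasNoLeaves {Λ : Type} (T : Set (List Λ)) : Prop :=
  ∀ w ∈ T, ∃ a : Λ, w ++ [a] ∈ T

/-- The boundary `∂T` of a tree: infinite words all of whose finite prefixes lie in `T`. -/
def treeBoundary {Λ : Type} (T : Set (List Λ)) : Set (ℕ → Λ) :=
  {x | ∀ n : ℕ, (List.ofFn fun i : Fin n => x i) ∈ T}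

/-- The descendant tree `T^v = {w : vw ∈ T}`. -/
def descTree {Λ : Type} (T : Set (List Λ)) (v : List Λ) : Set (List Λ) :=
  {w | v ++ w ∈ T}

/-- The composition `φ_w = φ_{w₁} ∘ ⋯ ∘ φ_{w_k}` for a finite word `w`. -/
def wordMap {X : Type} {Λ : Type} (Φ : Λ → X → X) (w : List Λ) : X → X :=
  fun z => w.foldr (fun a y => Φ a y) z

/-- The coding map `γ_Φ(i) = lim_n φ_{i₁} ∘ ⋯ ∘ φ_{iₙ}(0)`. -/
def codeMap {d : ℕ} {Λ : Type} (Φ : Λ → Euc d → Euc d) (x : ℕ → Λ) : Euc d :=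
  limUnder atTop (fun n => wordMap Φ (List.ofFn fun i : Fin n => x i) 0)

/-- `Γ_Φ(T) = γ_Φ(∂T)`. -/
def treeProj {d : ℕ} {Λ : Type} (Φ : Λ → Euc d → Euc d) (T : Set (List Λ)) : Set (Euc d) :=
  codeMap Φ '' treeBoundary T

/-- The collection `S_Φ^T = {Γ_Φ(T^v) : v ∈ T}`. -/
def branchSets {d : ℕ} {Λ : Type} (Φ : Λ → Euc d → Euc d) (T : Set (List Λ)) :
    Set (Set (Euc d)) :=
  {A | ∃ v ∈ T, A = treeProj Φ (descTree T v)}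

/-- `A` belongs to the closure of `S_Φ^T` in the Hausdorff metric: `A` is a non-empty compact
set which is a Hausdorff-metric limit of a sequence of sets `Γ_Φ(T^{vₙ})`, `vₙ ∈ T`. -/
def inClosureBranchSets {d : ℕ} {Λ : Type} (Φ : Λ → Euc d → Euc d) (T : Set (List Λ))
    (A : Set (Euc d)) : Prop :=
  IsCompact A ∧ A.Nonempty ∧ ∃ v : ℕ → List Λ, (∀ n, v n ∈ T) ∧
    Tendsto (fun n => hausdorffDist (treeProj Φ (descTree T (v n))) A) atTop (nhds 0)

/-- The scaling ratio `r_w = r_{w₁} ⋯ r_{w_k}` of a word. -/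
def wordRatio {Λ : Type} (r : Λ → ℝ) (w : List Λ) : ℝ := (w.map r).prod

/-- The section `Π_ρ = {w : r_w ≤ ρ < r_{w₁⋯w_{|w|-1}}}`. -/
def sectionPi {Λ : Type} (r : Λ → ℝ) (ρ : ℝ) : Set (List Λ) :=
  {w | wordRatio r w ≤ ρ ∧ ρ < wordRatio r w.dropLast}

/-- `r_min = min_{i ∈ Λ} r_i`. -/
def rMin {Λ : Type} [Fintype Λ] [Nonempty Λ] (r : Λ → ℝ) : ℝ :=
  Finset.univ.inf' Finset.univ_nonempty r

/-- The weak separation condition: there is `c ∈ ℕ` such that for every `ρ ∈ (0, r_min)`,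
every closed ball of radius `ρ` intersects at most `c` distinct sets among
`{φ_w(K) : w ∈ Π_ρ}` (identical sets counted once). -/
def SatisfiesWSC {d : ℕ} {Λ : Type} [Fintype Λ] [Nonempty Λ] (Φ : Λ → Euc d → Euc d)
    (r : Λ → ℝ) (K : Set (Euc d)) : Prop :=
  ∃ c : ℕ, ∀ ρ : ℝ, 0 < ρ → ρ < rMin r → ∀ x : Euc d,
    ∃ V : Finset (Set (Euc d)), V.card ≤ c ∧
      ∀ w ∈ sectionPi r ρ, (wordMap Φ w '' K ∩ closedBall x ρ).Nonempty →
        wordMap Φ w '' K ∈ V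

/-- The strong separation condition. -/
def SatisfiesSSC {d : ℕ} {Λ : Type} (Φ : Λ → Euc d → Euc d) (K : Set (Euc d)) : Prop :=
  ∀ i j : Λ, i ≠ j → (Φ i '' K) ∩ (Φ j '' K) = ∅

/-- `U` is an OSC set for `Φ`. -/
def IsOSCSet {d : ℕ} {Λ : Type} (Φ : Λ → Euc d → Euc d) (U : Set (Euc d)) : Prop :=
  U.Nonempty ∧ IsOpen U ∧ (∀ i, Φ i '' U ⊆ U) ∧
    ∀ i j : Λ, i ≠ j → (Φ i '' U) ∩ (Φ j '' U) = ∅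

/-- The open set condition. -/
def SatisfiesOSC {d : ℕ} {Λ : Type} (Φ : Λ → Euc d → Euc d) : Prop :=
  ∃ U : Set (Euc d), IsOSCSet Φ U

/-- `K` is the attractor of the IFS `Φ`. -/
def IsAttractor {d : ℕ} {Λ : Type} (Φ : Λ → Euc d → Euc d) (K : Set (Euc d)) : Prop :=
  IsCompact K ∧ K.Nonempty ∧ K = ⋃ i : Λ, Φ i '' K


set_option linter.unusedSectionVars false

namespace Aux

variable {d : ℕ}

lemma coord_abs_le_dist (x y : Euc d) (i : Fin d) : |x i - y i| ≤ dist x y := by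
  rw [EuclideanSpace.dist_eq]
  have h1 : |x i - y i| = Real.sqrt ((x i - y i) ^ 2) := (Real.sqrt_sq_eq_abs _).symm
  rw [h1]
  apply Real.sqrt_le_sqrt
  have h2 : (x i - y i) ^ 2 = dist (x i) (y i) ^ 2 := by
    rw [Real.dist_eq, sq_abs]
  rw [h2]
  exact Finset.single_le_sum (f := fun j => dist (x j) (y j) ^ 2)
    (fun j _ => sq_nonneg _) (Finset.mem_univ i)

lemma dist_le_sqrt_mul (x y : Euc d) {c : ℝ} (hc : 0 ≤ c)
    (h : ∀ i, |x i - y i| ≤ c) : dist x y ≤ Real.sqrt d * c := by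
  rw [EuclideanSpace.dist_eq]
  have h1 : ∑ i : Fin d, dist (x i) (y i) ^ 2 ≤ ∑ _i : Fin d, c ^ 2 := by
    apply Finset.sum_le_sum
    intro i _
    rw [Real.dist_eq]
    exact pow_le_pow_left₀ (abs_nonneg _) (h i) 2
  calc Real.sqrt (∑ i : Fin d, dist (x i) (y i) ^ 2)
      ≤ Real.sqrt (∑ _i : Fin d, c ^ 2) := Real.sqrt_le_sqrt h1
    _ = Real.sqrt (d * c ^ 2) := by rw [Finset.sum_const, Finset.card_univ,
        Fintype.card_fin, nsmul_eq_mul]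
    _ = Real.sqrt d * c := by
        rw [Real.sqrt_mul (Nat.cast_nonneg d), Real.sqrt_sq hc]

lemma sim_continuous {f : Euc d → Euc d} {r : ℝ} (hr : 0 < r)
    (h : IsSimilarityWithRatio f r) : Continuous f := by
  rw [Metric.continuous_iff]
  intro b ε hε
  refine ⟨ε / r, by positivity, fun a ha => ?_⟩
  rw [h]
  rw [lt_div_iff₀ hr] at ha
  linarith [ha]

lemma sim_injective {f : Euc d → Euc d} {r : ℝ} (hr : 0 < r)
    (h : IsSimilarityWithRatio f r) : Function.Injective f := by
  intro x y hxy
  have h1 := h x y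
  rw [hxy, dist_self] at h1
  have h2 : dist x y = 0 := by
    rcases mul_eq_zero.mp h1.symm with h | h
    · exact absurd h hr.ne'
    · exact h
  exact dist_eq_zero.mp h2

lemma sim_comp {f g : Euc d → Euc d} {r s : ℝ}
    (hf : IsSimilarityWithRatio f r) (hg : IsSimilarityWithRatio g s) :
    IsSimilarityWithRatio (f ∘ g) (r * s) := by
  intro x y
  simp only [Function.comp]
  rw [hf, hg, mul_assoc]

lemma sim_surjective {f : Euc d → Euc d} {r : ℝ} (hr : 0 < r)
    (h : IsSimilarityWithRatio f r) : Function.Surjective f := by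
  have he' : IsSimilarityWithRatio (fun x => (1 / r) • (f x - f 0)) 1 := by
    intro x y
    have hsub : (1 / r) • (f x - f 0) - (1 / r) • (f y - f 0)
        = (1 / r) • (f x - f y) := by
      rw [← smul_sub]; congr 1; abel
    rw [dist_eq_norm, hsub, norm_smul, ← dist_eq_norm, h]
    rw [Real.norm_eq_abs, abs_of_pos (by positivity : (0:ℝ) < 1 / r)]
    field_simp
  set e : Euc d → Euc d := fun x => (1 / r) • (f x - f 0) with he_def
  have he : Isometry e := by
    apply Isometry.of_dist_eq
    intro x y
    rw [he' x y, one_mul]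
  have hmid : ∀ x y : Euc d, e (midpoint ℝ x y) = midpoint ℝ (e x) (e y) := by
    intro x y
    have h1 : dist (e x) (e (midpoint ℝ x y)) = dist (e x) (e y) / 2 := by
      rw [he.dist_eq, he.dist_eq, dist_left_midpoint (𝕜 := ℝ)]
      norm_num
      ring
    have h2 : dist (e (midpoint ℝ x y)) (e y) = dist (e x) (e y) / 2 := by
      rw [he.dist_eq, he.dist_eq, dist_midpoint_right (𝕜 := ℝ)]
      norm_num
      ring
    exact eq_midpoint_of_dist_eq_half h1 h2
  set A : Euc d →ᵃ[ℝ] Euc d := AffineMap.ofMapMidpoint e hmid he.continuous with hA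
  have hAe : ∀ x, A x = e x := fun x => rfl
  have hAinj : Function.Injective (A : Euc d → Euc d) := by
    intro x y hxy
    rw [hAe, hAe] at hxy
    exact he.injective hxy
  have hlin : ∀ x : Euc d, A x = A.linear x + A 0 := by
    intro x
    have h0 := A.map_vadd (0 : Euc d) x
    simp only [vadd_eq_add, add_zero] at h0
    rw [h0]
  have hlinj : Function.Injective A.linear := by
    intro x y hxy
    have hxy2 : A x = A y := by rw [hlin x, hlin y, hxy]
    exact hAinj hxy2
  have hlsurj : Function.Surjective A.linear :=
    (LinearMap.injective_iff_surjective (f := A.linear)).mp hlinj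
  have hesurj : Function.Surjective e := by
    intro y
    obtain ⟨x, hx⟩ := hlsurj (y - A 0)
    refine ⟨x, ?_⟩
    rw [← hAe, hlin, hx]
    abel
  intro y
  obtain ⟨x, hx⟩ := hesurj ((1 / r) • (y - f 0))
  refine ⟨x, ?_⟩
  have h2 : f x - f 0 = y - f 0 := by
    have hx' : (1 / r) • (f x - f 0) = (1 / r) • (y - f 0) := hx
    have hr' : (1 / r : ℝ) ≠ 0 := by positivity
    exact smul_right_injective _ hr' hx'
  have := sub_left_inj.mp h2
  exact this

end Aux

namespace Aux

variable {d : ℕ} {Λ : Type} [Fintype Λ] [Nonempty Λ]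

section Inv

variable {f : Euc d → Euc d} {r : ℝ}

/-- inverse of a similarity -/
lemma sim_inv (hr : 0 < r) (h : IsSimilarityWithRatio f r) :
    IsSimilarityWithRatio (Function.invFun f) (1 / r) ∧
    (∀ x, f (Function.invFun f x) = x) ∧ (∀ x, Function.invFun f (f x) = x) := by
  have hsur := sim_surjective hr h
  have hinj := sim_injective hr h
  have hright : ∀ x, f (Function.invFun f x) = x :=
    fun x => Function.rightInverse_invFun hsur x
  have hleft : ∀ x, Function.invFun f (f x) = x :=
    fun x => Function.leftInverse_invFun hinj x
  refine ⟨?_, hright, hleft⟩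
  intro x y
  have h1 : dist x y = r * dist (Function.invFun f x) (Function.invFun f y) := by
    conv_lhs => rw [← hright x, ← hright y]
    rw [h]
  rw [h1]
  field_simp

end Inv

section Word

variable (Φ : Λ → Euc d → Euc d) (r : Λ → ℝ)

lemma wordMap_nil (z : Euc d) : wordMap Φ [] z = z := rfl

lemma wordMap_cons (a : Λ) (w : List Λ) (z : Euc d) :
    wordMap Φ (a :: w) z = Φ a (wordMap Φ w z) := rfl

lemma wordMap_append (u w : List Λ) (z : Euc d) :
    wordMap Φ (u ++ w) z = wordMap Φ u (wordMap Φ w z) := by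
  simp only [wordMap, List.foldr_append]

lemma wordRatio_nil : wordRatio r [] = 1 := by simp [wordRatio]

lemma wordRatio_cons (a : Λ) (w : List Λ) :
    wordRatio r (a :: w) = r a * wordRatio r w := by simp [wordRatio]

variable {Φ r} (hΦ : ∀ i, IsContractingSimilarity (Φ i) (r i))
include hΦ

lemma wordMap_ratio (w : List Λ) :
    IsSimilarityWithRatio (wordMap Φ w) (wordRatio r w) := by
  induction w with
  | nil => intro x y; simp [wordMap_nil, wordRatio_nil]
  | cons a w ih =>
      intro x y
      rw [wordMap_cons, wordMap_cons, wordRatio_cons, (hΦ a).2.2, ih, mul_assoc]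

lemma wordRatio_pos (w : List Λ) : 0 < wordRatio r w := by
  induction w with
  | nil => simp [wordRatio_nil]
  | cons a w ih => rw [wordRatio_cons]; exact mul_pos (hΦ a).1 ih

lemma wordRatio_le_one (w : List Λ) : wordRatio r w ≤ 1 := by
  induction w with
  | nil => simp [wordRatio_nil]
  | cons a w ih =>
      rw [wordRatio_cons]
      calc r a * wordRatio r w ≤ 1 * 1 := by
            apply mul_le_mul (hΦ a).2.1.le ih (wordRatio_pos hΦ w).le zero_le_one
        _ = 1 := by ring

end Word

end Aux

namespace Aux

variable {d : ℕ} {Λ : Type} [Fintype Λ] [Nonempty Λ]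

section Code

/-- the finite prefix of an infinite word -/
def pre (i : ℕ → Λ) (n : ℕ) : List Λ := List.ofFn (fun k : Fin n => i k)

lemma pre_length (i : ℕ → Λ) (n : ℕ) : (pre i n).length = n := by
  simp [pre]

lemma pre_zero (i : ℕ → Λ) : pre i 0 = [] := by simp [pre]

lemma pre_succ (i : ℕ → Λ) (n : ℕ) : pre i (n + 1) = pre i n ++ [i n] := by
  rw [pre, List.ofFn_succ', List.concat_eq_append]
  rfl

lemma pre_getElem (i : ℕ → Λ) (n : ℕ) (k : ℕ) (hk : k < (pre i n).length) :
    (pre i n)[k] = i k := by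
  simp [pre]

lemma pre_add (i : ℕ → Λ) (m n : ℕ) :
    pre i (m + n) = pre i m ++ List.ofFn (fun k : Fin n => i (m + k)) := by
  induction n with
  | zero => simp [pre]
  | succ n ih =>
      rw [← Nat.add_assoc, pre_succ, ih, List.ofFn_succ', List.concat_eq_append,
        List.append_assoc]
      rfl

variable {Φ : Λ → Euc d → Euc d} {r : Λ → ℝ} (hΦ : ∀ i, IsContractingSimilarity (Φ i) (r i))

/-- max contraction ratio -/
def rmax (r : Λ → ℝ) : ℝ := Finset.univ.sup' Finset.univ_nonempty r

/-- uniform bound for dist (Φ a 0) 0 -/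
def C0 (Φ : Λ → Euc d → Euc d) : ℝ :=
  Finset.univ.sup' Finset.univ_nonempty (fun a => dist (Φ a 0) 0)

include hΦ

lemma rmax_lt_one : rmax r < 1 := by
  rw [rmax, Finset.sup'_lt_iff]
  exact fun a _ => (hΦ a).2.1

lemma rmax_pos : 0 < rmax r := by
  obtain ⟨a⟩ := ‹Nonempty Λ›
  exact lt_of_lt_of_le (hΦ a).1 (Finset.le_sup' r (Finset.mem_univ a))

lemma le_rmax (a : Λ) : r a ≤ rmax r := Finset.le_sup' r (Finset.mem_univ a)

omit hΦ in
lemma C0_nonneg : 0 ≤ C0 Φ := by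
  obtain ⟨a⟩ := ‹Nonempty Λ›
  exact le_trans dist_nonneg (Finset.le_sup' (fun a => dist (Φ a 0) 0) (Finset.mem_univ a))

omit hΦ in
lemma le_C0 (a : Λ) : dist (Φ a 0) 0 ≤ C0 Φ :=
  Finset.le_sup' (fun a => dist (Φ a 0) 0) (Finset.mem_univ a)

lemma wordRatio_le_pow (w : List Λ) : wordRatio r w ≤ (rmax r) ^ w.length := by
  induction w with
  | nil => simp [wordRatio_nil]
  | cons a w ih =>
      rw [wordRatio_cons, List.length_cons, pow_succ, mul_comm ((rmax r) ^ w.length)]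
      exact mul_le_mul (le_rmax hΦ a) ih (wordRatio_pos hΦ w).le
        (le_trans (hΦ _).1.le (le_rmax hΦ a))

lemma dist_code_seq (i : ℕ → Λ) (n : ℕ) :
    dist (wordMap Φ (pre i n) 0) (wordMap Φ (pre i (n + 1)) 0) ≤ C0 Φ * (rmax r) ^ n := by
  rw [pre_succ, wordMap_append]
  have h1 : wordMap Φ [i n] (0 : Euc d) = Φ (i n) 0 := rfl
  rw [h1, wordMap_ratio hΦ]
  calc wordRatio r (pre i n) * dist (0 : Euc d) (Φ (i n) 0)
      ≤ (rmax r) ^ n * C0 Φ := by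
        apply mul_le_mul
        · have := wordRatio_le_pow hΦ (pre i n); rwa [pre_length] at this
        · rw [dist_comm]; exact le_C0 (i n)
        · exact dist_nonneg
        · exact pow_nonneg (le_trans (hΦ (Classical.arbitrary Λ)).1.le (le_rmax hΦ _)) n
    _ = C0 Φ * (rmax r) ^ n := by ring

lemma code_cauchy (i : ℕ → Λ) : CauchySeq (fun n => wordMap Φ (pre i n) 0) :=
  cauchySeq_of_le_geometric (rmax r) (C0 Φ) (rmax_lt_one hΦ) (dist_code_seq hΦ i)

lemma code_tendsto (i : ℕ → Λ) :
    Tendsto (fun n => wordMap Φ (pre i n) 0) atTop (nhds (codeMap Φ i)) := by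
  obtain ⟨L, hL⟩ := cauchySeq_tendsto_of_complete (code_cauchy hΦ i)
  have : codeMap Φ i = L := by
    have h2 : (fun n => wordMap Φ (List.ofFn fun k : Fin n => i k) 0)
        = fun n => wordMap Φ (pre i n) 0 := rfl
    rw [codeMap, h2]
    exact hL.limUnder_eq
  rw [this]; exact hL

lemma code_tendsto' (i : ℕ → Λ) (x : Euc d) :
    Tendsto (fun n => wordMap Φ (pre i n) x) atTop (nhds (codeMap Φ i)) := by
  rw [tendsto_iff_dist_tendsto_zero]
  have hb : ∀ n, dist (wordMap Φ (pre i n) x) (codeMap Φ i)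
      ≤ (rmax r) ^ n * dist x 0 + dist (wordMap Φ (pre i n) 0) (codeMap Φ i) := by
    intro n
    calc dist (wordMap Φ (pre i n) x) (codeMap Φ i)
        ≤ dist (wordMap Φ (pre i n) x) (wordMap Φ (pre i n) 0)
          + dist (wordMap Φ (pre i n) 0) (codeMap Φ i) := dist_triangle _ _ _
      _ ≤ (rmax r) ^ n * dist x 0 + dist (wordMap Φ (pre i n) 0) (codeMap Φ i) := by
          apply add_le_add_left
          rw [wordMap_ratio hΦ]
          apply mul_le_mul_of_nonneg_right _ dist_nonneg
          have := wordRatio_le_pow hΦ (pre i n); rwa [pre_length] at this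
  apply squeeze_zero (fun n => dist_nonneg) hb
  have h1 : Tendsto (fun n : ℕ => (rmax r) ^ n * dist x 0) atTop (nhds 0) := by
    have := (tendsto_pow_atTop_nhds_zero_of_lt_one (rmax_pos hΦ).le
      (rmax_lt_one hΦ)).mul_const (dist x 0)
    simpa using this
  have h2 : Tendsto (fun n => dist (wordMap Φ (pre i n) 0) (codeMap Φ i)) atTop (nhds 0) :=
    tendsto_iff_dist_tendsto_zero.mp (code_tendsto hΦ i)
  simpa using h1.add h2

lemma code_bound (i : ℕ → Λ) : dist (0 : Euc d) (codeMap Φ i) ≤ C0 Φ / (1 - rmax r) := by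
  have h0 : wordMap Φ (pre i 0) (0 : Euc d) = 0 := by rw [pre_zero]; rfl
  have := dist_le_of_le_geometric_of_tendsto₀ (rmax r) (C0 Φ) (rmax_lt_one hΦ)
    (dist_code_seq hΦ i) (code_tendsto hΦ i)
  rwa [h0] at this

/-- appending a finite word to an infinite word -/
def seqAppend (v : List Λ) (j : ℕ → Λ) : ℕ → Λ :=
  fun n => if h : n < v.length then v[n] else j (n - v.length)

omit hΦ in
lemma pre_seqAppend (v : List Λ) (j : ℕ → Λ) (n : ℕ) :
    pre (seqAppend v j) (v.length + n) = v ++ pre j n := by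
  apply List.ext_getElem
  · simp [pre_length]
  · intro k h1 h2
    rw [pre_getElem]
    by_cases hk : k < v.length
    · rw [List.getElem_append_left hk, seqAppend, dif_pos hk]
    · push_neg at hk
      rw [List.getElem_append_right hk, seqAppend, dif_neg (not_lt.mpr hk), pre_getElem]

lemma codeMap_seqAppend (v : List Λ) (j : ℕ → Λ) :
    codeMap Φ (seqAppend v j) = wordMap Φ v (codeMap Φ j) := by
  have h1 : Tendsto (fun n => wordMap Φ (pre (seqAppend v j) (v.length + n)) 0) atTop
      (nhds (codeMap Φ (seqAppend v j))) := by
    apply (code_tendsto hΦ (seqAppend v j)).comp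
    exact (tendsto_add_atTop_nat v.length).congr (fun n => Nat.add_comm n v.length)
  have h2 : (fun n => wordMap Φ (pre (seqAppend v j) (v.length + n)) 0)
      = fun n => wordMap Φ v (wordMap Φ (pre j n) 0) := by
    funext n
    rw [pre_seqAppend, wordMap_append]
  rw [h2] at h1
  have hc : Continuous (wordMap Φ v) := sim_continuous (wordRatio_pos hΦ v) (wordMap_ratio hΦ v)
  have h3 := (hc.tendsto (codeMap Φ j)).comp (code_tendsto hΦ j)
  exact tendsto_nhds_unique h1 h3

end Code

end Aux

namespace Aux

variable {d : ℕ} {Λ : Type} [Fintype Λ] [Nonempty Λ]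

section Tree

variable {Φ : Λ → Euc d → Euc d} {r : Λ → ℝ} {T : Set (List Λ)} {U : Set (Euc d)}

lemma descTree_isTree (hT : IsTree T) {v : List Λ} (hv : v ∈ T) :
    IsTree (descTree T v) := by
  constructor
  · show v ++ [] ∈ T
    simpa using hv
  · intro w hw u hu
    obtain ⟨t, ht⟩ := hu
    show v ++ u ∈ T
    apply hT.2 (v ++ w) hw
    exact ⟨t, by rw [← ht, List.append_assoc]⟩

lemma descTree_noLeaves (hnl : HasNoLeaves T) {v : List Λ} :
    HasNoLeaves (descTree T v) := by
  intro w hw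
  obtain ⟨a, ha⟩ := hnl (v ++ w) hw
  exact ⟨a, by show v ++ (w ++ [a]) ∈ T; rwa [← List.append_assoc]⟩

lemma boundary_nonempty (hT : IsTree T) (hnl : HasNoLeaves T) :
    (treeBoundary T).Nonempty := by
  classical
  set c : List Λ → Λ := fun w => if h : w ∈ T then Classical.choose (hnl w h)
    else Classical.arbitrary Λ with hc
  set W : ℕ → List Λ := fun n => Nat.rec (motive := fun _ => List Λ) []
    (fun _ w => w ++ [c w]) n with hW
  set i : ℕ → Λ := fun n => c (W n) with hi
  have hWsucc : ∀ n, W (n + 1) = W n ++ [c (W n)] := fun n => rfl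
  have key : ∀ n, W n ∈ T ∧ W n = pre i n := by
    intro n
    induction n with
    | zero => exact ⟨hT.1, by rw [pre_zero]; rfl⟩
    | succ n ih =>
        have hmem : W n ++ [c (W n)] ∈ T := by
          rw [hc]
          simp only [dif_pos ih.1]
          exact Classical.choose_spec (hnl (W n) ih.1)
        constructor
        · rw [hWsucc]; exact hmem
        · rw [hWsucc, pre_succ, ← ih.2, hi]
  exact ⟨i, fun n => by show pre i n ∈ T; rw [← (key n).2]; exact (key n).1⟩

lemma pre_take (v : List Λ) (j : ℕ → Λ) {n : ℕ} (hn : n ≤ v.length) :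
    pre (seqAppend v j) n = v.take n := by
  apply List.ext_getElem
  · rw [pre_length, List.length_take]; omega
  · intro k h1 h2
    have hk : k < v.length := by rw [pre_length] at h1; omega
    rw [pre_getElem, List.getElem_take, seqAppend, dif_pos hk]

lemma seqAppend_mem_boundary (hT : IsTree T) {v : List Λ} (hv : v ∈ T) {j : ℕ → Λ}
    (hj : j ∈ treeBoundary (descTree T v)) : seqAppend v j ∈ treeBoundary T := by
  intro n
  show pre (seqAppend v j) n ∈ T
  rcases le_or_gt n v.length with hn | hn
  · rw [pre_take v j hn]
    exact hT.2 v hv _ (List.take_prefix n v)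
  · have hn' : n = v.length + (n - v.length) := by omega
    rw [hn', pre_seqAppend]
    exact hj (n - v.length)

variable (hΦ : ∀ i, IsContractingSimilarity (Φ i) (r i))
include hΦ

lemma wordMap_image_treeProj (hT : IsTree T) {v : List Λ} (hv : v ∈ T) {x : Euc d}
    (hx : x ∈ treeProj Φ (descTree T v)) : wordMap Φ v x ∈ treeProj Φ T := by
  obtain ⟨j, hj, rfl⟩ := hx
  exact ⟨seqAppend v j, seqAppend_mem_boundary hT hv hj, codeMap_seqAppend hΦ v j⟩

omit hΦ in
lemma wordMap_mem_invariant (hU : ∀ a : Λ, Φ a '' U ⊆ U) (w : List Λ) {x : Euc d}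
    (hx : x ∈ U) : wordMap Φ w x ∈ U := by
  induction w with
  | nil => exact hx
  | cons a w ih => exact hU a ⟨wordMap Φ w x, ih, rfl⟩

lemma code_mem_closure (hU : IsOSCSet Φ U) (i : ℕ → Λ) (m : ℕ) :
    codeMap Φ i ∈ closure (wordMap Φ (pre i m) '' U) := by
  obtain ⟨u0, hu0⟩ := hU.1
  have hmem : ∀ k : ℕ, wordMap Φ (pre i (m + k)) u0 ∈ wordMap Φ (pre i m) '' U := by
    intro k
    rw [pre_add]
    exact ⟨wordMap Φ (List.ofFn fun t : Fin k => i (m + t)) u0,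
      wordMap_mem_invariant hU.2.2.1 _ hu0, (wordMap_append Φ _ _ u0).symm⟩
  have htend : Tendsto (fun k => wordMap Φ (pre i (m + k)) u0) atTop
      (nhds (codeMap Φ i)) := by
    apply (code_tendsto' hΦ i u0).comp
    exact (tendsto_add_atTop_nat m).congr (fun n => Nat.add_comm n m)
  exact mem_closure_of_tendsto htend (Filter.Eventually.of_forall hmem)

lemma image_open_of_sim {f : Euc d → Euc d} {ρ : ℝ} (hρ : 0 < ρ)
    (hf : IsSimilarityWithRatio f ρ) (hUo : IsOpen U) : IsOpen (f '' U) := by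
  obtain ⟨hinv, hri, hli⟩ := sim_inv hρ hf
  have himg : f '' U = (Function.invFun f) ⁻¹' U := by
    ext z
    constructor
    · rintro ⟨u, hu, rfl⟩
      rwa [Set.mem_preimage, hli u]
    · intro hz
      exact ⟨Function.invFun f z, hz, hri z⟩
  rw [himg]
  exact hUo.preimage (sim_continuous (by positivity) hinv)

lemma closure_disj (hU : IsOSCSet Φ U) (u : List Λ) {a b : Λ} (hab : a ≠ b)
    {z : Euc d} (hza : z ∈ closure (wordMap Φ (u ++ [a]) '' U))
    (hzb : z ∈ wordMap Φ (u ++ [b]) '' U) : False := by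
  have himg : ∀ c : Λ, wordMap Φ (u ++ [c]) '' U = wordMap Φ u '' (Φ c '' U) := by
    intro c
    rw [← Set.image_comp]
    apply Set.image_congr'
    intro x
    rw [Function.comp_apply, wordMap_append]
    rfl
  rw [himg] at hza hzb
  obtain ⟨hinv, hri, hli⟩ := sim_inv (wordRatio_pos hΦ u) (wordMap_ratio hΦ u)
  obtain ⟨q, hq, htq⟩ := mem_closure_iff_seq_limit.mp hza
  obtain ⟨p, hp, hpz⟩ := hzb
  have hpk : ∀ k, ∃ pk ∈ Φ a '' U, q k = wordMap Φ u pk := by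
    intro k
    obtain ⟨pk, hpk, hqk⟩ := hq k
    exact ⟨pk, hpk, hqk.symm⟩
  choose pk hpk1 hpk2 using hpk
  have hcont : Continuous (Function.invFun (wordMap Φ u)) :=
    sim_continuous (by
      have := wordRatio_pos hΦ u
      positivity) hinv
  have htp : Tendsto pk atTop (nhds p) := by
    have h1 : Tendsto (fun k => Function.invFun (wordMap Φ u) (q k)) atTop
        (nhds (Function.invFun (wordMap Φ u) z)) := (hcont.tendsto z).comp htq
    have h2 : (fun k => Function.invFun (wordMap Φ u) (q k)) = pk := by
      funext k; rw [hpk2, hli]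
    have h3 : Function.invFun (wordMap Φ u) z = p := by rw [← hpz, hli]
    rwa [h2, h3] at h1
  have hopen : IsOpen (Φ b '' U) :=
    image_open_of_sim hΦ (hΦ b).1 (hΦ b).2.2 hU.2.1
  have hev : ∀ᶠ k in atTop, pk k ∈ Φ b '' U :=
    htp.eventually (hopen.mem_nhds hp)
  obtain ⟨k, hk⟩ := hev.exists
  have : pk k ∈ (Φ a '' U) ∩ (Φ b '' U) := ⟨hpk1 k, hk⟩
  rw [hU.2.2.2 a b hab] at this
  exact this

/-- Key separation lemma: a point of `F` seen through `φ_v⁻¹` inside `U` must be in `Γ(T^v)`. -/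
lemma sep_lemma (hT : IsTree T) (hU : IsOSCSet Φ U)
    {v : List Λ} (hv : v ∈ T) {i : ℕ → Λ} (hi : i ∈ treeBoundary T)
    {x : Euc d} (hx : wordMap Φ v x = codeMap Φ i) (hxU : x ∈ U) :
    x ∈ treeProj Φ (descTree T v) := by
  classical
  by_cases hcase : pre i v.length = v
  · -- i extends v
    set j : ℕ → Λ := fun n => i (n + v.length) with hj
    have hji : seqAppend v j = i := by
      funext n
      rw [seqAppend]
      by_cases hn : n < v.length
      · rw [dif_pos hn]
        have h2 : (pre i v.length)[n]'(by rw [pre_length]; exact hn) = i n :=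
          pre_getElem _ _ _ _
        rw [← h2]
        simp only [hcase]
      · rw [dif_neg hn]
        push_neg at hn
        show i ((n - v.length) + v.length) = i n
        rw [Nat.sub_add_cancel hn]
    have hjT : j ∈ treeBoundary (descTree T v) := by
      intro n
      show v ++ pre j n ∈ T
      have h1 : v ++ pre j n = pre i (v.length + n) := by
        rw [pre_add]
        congr 1
        · exact hcase.symm
        · rw [pre]
          congr 1
          funext k
          show i (↑k + v.length) = i (v.length + ↑k)
          rw [Nat.add_comm]
      rw [h1]
      exact hi (v.length + n)
    have h2 : wordMap Φ v (codeMap Φ j) = codeMap Φ i := by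
      rw [← codeMap_seqAppend hΦ, hji]
    have h3 : x = codeMap Φ j :=
      sim_injective (wordRatio_pos hΦ v) (wordMap_ratio hΦ v) (by rw [hx, ← h2])
    exact ⟨j, hjT, h3.symm⟩
  · -- first difference at index m' < v.length
    exfalso
    have hP : ∃ n, pre i n ≠ v.take n := ⟨v.length, by rwa [List.take_length]⟩
    set m := Nat.find hP with hmdef
    have hm : pre i m ≠ v.take m := Nat.find_spec hP
    have hmin : ∀ k, k < m → pre i k = v.take k := by
      intro k hk
      have := Nat.find_min hP hk
      tauto
    have hm0 : m ≠ 0 := by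
      intro h0
      apply hm
      rw [h0, pre_zero, List.take_zero]
    have hmle : m ≤ v.length := by
      by_contra hcon
      push_neg at hcon
      exact hcase (by rw [hmin v.length hcon, List.take_length])
    set m' := m - 1 with hm'def
    have hmm : m = m' + 1 := by omega
    have hmlt : m' < v.length := by omega
    have heq : pre i m' = v.take m' := hmin m' (by omega)
    have htake : v.take m = v.take m' ++ [v[m']] := by
      rw [hmm, List.take_succ, List.getElem?_eq_getElem hmlt]
      rfl
    have hpre : pre i m = pre i m' ++ [i m'] := by rw [hmm, pre_succ]
    have hab : i m' ≠ v[m'] := by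
      intro hcon
      apply hm
      rw [hpre, htake, heq, hcon]
    -- decomposition of v
    have hvdec : (v.take m' ++ [v[m']]) ++ v.drop m = v := by
      rw [← htake, List.take_append_drop]
    -- z in closure of copy a
    have hza : codeMap Φ i ∈ closure (wordMap Φ (v.take m' ++ [i m']) '' U) := by
      have := code_mem_closure hΦ hU i m
      rwa [hpre, heq] at this
    -- z in copy b
    have hzb : codeMap Φ i ∈ wordMap Φ (v.take m' ++ [v[m']]) '' U := by
      refine ⟨wordMap Φ (v.drop m) x, wordMap_mem_invariant hU.2.2.1 _ hxU, ?_⟩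
      rw [← wordMap_append, hvdec, hx]
    exact closure_disj hΦ hU (v.take m') hab hza hzb

end Tree

end Aux

namespace Aux

variable {d : ℕ} {Λ : Type} [Fintype Λ] [Nonempty Λ]

section Main

variable {Φ : Λ → Euc d → Euc d} {r : Λ → ℝ}

lemma zero_mem_unitCube : (0 : Euc d) ∈ unitCube d := by
  intro i
  simp [unitCube]

lemma coord_continuous (i : Fin d) : Continuous (fun x : Euc d => x i) := by
  rw [Metric.continuous_iff]
  intro b ε hε
  refine ⟨ε, hε, fun a ha => ?_⟩
  calc dist (a i) (b i) = |a i - b i| := Real.dist_eq _ _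
    _ ≤ dist a b := coord_abs_le_dist a b i
    _ < ε := ha

lemma isClosed_unitCube : IsClosed (unitCube d) := by
  have h : unitCube d = ⋂ i, (fun x : Euc d => x i) ⁻¹' (Set.Icc 0 1) := by
    ext x; simp [unitCube, Set.mem_iInter]
  rw [h]
  exact isClosed_iInter (fun i => isClosed_Icc.preimage (coord_continuous i))

lemma isClosed_cube (c : Euc d) (t : ℝ) : IsClosed {x : Euc d | ∀ i, |x i - c i| ≤ t} := by
  have h : {x : Euc d | ∀ i, |x i - c i| ≤ t}
      = ⋂ i, (fun x : Euc d => |x i - c i|) ⁻¹' (Set.Iic t) := by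
    ext x; simp [Set.mem_iInter]
  rw [h]
  refine isClosed_iInter (fun i => isClosed_Iic.preimage ?_)
  exact ((coord_continuous i).sub continuous_const).abs

lemma affine_sim (α : ℝ) (hα : 0 < α) (c w : Euc d) :
    IsSimilarityWithRatio (fun x => α • (x - c) + w) α := by
  intro x y
  have h : (α • (x - c) + w) - (α • (y - c) + w) = α • (x - y) := by
    rw [smul_sub, smul_sub, smul_sub]
    abel
  rw [dist_eq_norm, h, norm_smul, Real.norm_eq_abs, abs_of_pos hα, dist_eq_norm]

lemma affine_apply (α : ℝ) (c w : Euc d) (x : Euc d) (i : Fin d) :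
    (α • (x - c) + w) i = α * (x i - c i) + w i := by
  simp [PiLp.add_apply, PiLp.smul_apply, PiLp.sub_apply]

/-- Step 1: the `δ`-margin version of the window condition. -/
lemma step1 {S U : Set (Euc d)} (hSc : IsCompact S) (hSne : S.Nonempty)
    (hUo : IsOpen U) {ψ : Euc d → Euc d} (hψc : Continuous ψ)
    (hW : ψ ⁻¹' unitCube d ∩ S ⊆ U) :
    ∃ δ : ℝ, 0 < δ ∧ ∀ x : Euc d, infDist x S ≤ δ → infDist (ψ x) (unitCube d) ≤ δ → x ∈ U := by
  by_contra hcon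
  push_neg at hcon
  have hseq : ∀ k : ℕ, ∃ x : Euc d, infDist x S ≤ 1 / (k + 1)
      ∧ infDist (ψ x) (unitCube d) ≤ 1 / (k + 1) ∧ x ∉ U := by
    intro k
    obtain ⟨x, h1, h2, h3⟩ := hcon (1 / (k + 1)) (by positivity)
    exact ⟨x, h1, h2, h3⟩
  choose x hx1 hx2 hx3 using hseq
  obtain ⟨MS, hMS⟩ := hSc.isBounded.subset_closedBall 0
  have hxball : ∀ k, x k ∈ closedBall (0 : Euc d) (MS + 2) := by
    intro k
    have h1 : infDist (x k) S < 2 := lt_of_le_of_lt (hx1 k) (by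
      rw [div_lt_iff₀ (by positivity)]
      nlinarith [Nat.cast_nonneg (α := ℝ) k])
    obtain ⟨s, hs, hds⟩ := (Metric.infDist_lt_iff hSne).mp h1
    have h2 : dist s (0 : Euc d) ≤ MS := hMS hs
    calc dist (x k) 0 ≤ dist (x k) s + dist s 0 := dist_triangle _ _ _
      _ ≤ 2 + MS := add_le_add hds.le h2
      _ = MS + 2 := by ring
  obtain ⟨x0, _, φ, hφ, htend⟩ := (isCompact_closedBall (0 : Euc d) (MS + 2)).tendsto_subseq hxball
  have hone : Tendsto (fun k => 1 / ((φ k : ℝ) + 1)) atTop (nhds 0) :=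
    tendsto_one_div_add_atTop_nhds_zero_nat.comp hφ.tendsto_atTop
  have hx0S : x0 ∈ S := by
    have h1 : Tendsto (fun k => infDist (x (φ k)) S) atTop (nhds (infDist x0 S)) :=
      ((Metric.continuous_infDist_pt S).tendsto x0).comp htend
    have h2 : infDist x0 S ≤ 0 :=
      le_of_tendsto_of_tendsto' h1 hone (fun k => hx1 (φ k))
    have h3 : infDist x0 S = 0 := le_antisymm h2 Metric.infDist_nonneg
    exact (IsClosed.mem_iff_infDist_zero hSc.isClosed hSne).mpr h3
  have hx0Q : ψ x0 ∈ unitCube d := by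
    have h1 : Tendsto (fun k => infDist (ψ (x (φ k))) (unitCube d)) atTop
        (nhds (infDist (ψ x0) (unitCube d))) :=
      (((Metric.continuous_infDist_pt (unitCube d)).comp hψc).tendsto x0).comp htend
    have h2 : infDist (ψ x0) (unitCube d) ≤ 0 :=
      le_of_tendsto_of_tendsto' h1 hone (fun k => hx2 (φ k))
    have h3 : infDist (ψ x0) (unitCube d) = 0 := le_antisymm h2 Metric.infDist_nonneg
    exact (IsClosed.mem_iff_infDist_zero isClosed_unitCube ⟨0, zero_mem_unitCube⟩).mpr h3
  have hx0U : x0 ∈ U := hW ⟨hx0Q, hx0S⟩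
  have hev : ∀ᶠ k in atTop, x (φ k) ∈ U := htend.eventually (hUo.mem_nhds hx0U)
  obtain ⟨k, hk⟩ := hev.exists
  exact hx3 (φ k) hk

end Main

end Aux

namespace Aux

variable {d : ℕ} {Λ : Type} [Fintype Λ] [Nonempty Λ]
variable {Φ : Λ → Euc d → Euc d} {r : Λ → ℝ}

lemma treeProj_bounded (hΦ : ∀ i, IsContractingSimilarity (Φ i) (r i)) (T' : Set (List Λ)) :
    Bornology.IsBounded (treeProj Φ T') := by
  apply (Metric.isBounded_closedBall (x := (0 : Euc d)) (r := C0 Φ / (1 - rmax r))).subset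
  rintro z ⟨i, _, rfl⟩
  rw [Metric.mem_closedBall, dist_comm]
  exact code_bound hΦ i

lemma treeProj_nonempty (hΦ : ∀ i, IsContractingSimilarity (Φ i) (r i))
    {T : Set (List Λ)} (hT : IsTree T) (hTnl : HasNoLeaves T) {v : List Λ} (hv : v ∈ T) :
    (treeProj Φ (descTree T v)).Nonempty :=
  (boundary_nonempty (descTree_isTree hT hv) (descTree_noLeaves hTnl)).image _

/-- the center of the unit cube -/
def halfVec (d : ℕ) : Euc d := WithLp.toLp 2 (fun _ => (1:ℝ)/2)

lemma halfVec_apply (i : Fin d) : halfVec d i = 1/2 := rfl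

lemma window_iff {u a : ℝ} (hu : 0 < u) :
    ((2*u)⁻¹ * a + 1/2 ∈ Set.Icc (0:ℝ) 1) ↔ |a| ≤ u := by
  have h2u : (0:ℝ) < 2*u := by positivity
  rw [Set.mem_Icc, abs_le, inv_mul_eq_div]
  constructor
  · rintro ⟨h1, h2⟩
    have hb1 : -(1/2 : ℝ) ≤ a / (2*u) := by linarith
    have hb2 : a / (2*u) ≤ 1/2 := by linarith
    constructor
    · have := (le_div_iff₀ h2u).mp hb1
      linarith
    · have := (div_le_iff₀ h2u).mp hb2
      linarith
  · rintro ⟨h1, h2⟩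
    have hb1 : -(1/2 : ℝ) ≤ a / (2*u) := (le_div_iff₀ h2u).mpr (by linarith)
    have hb2 : a / (2*u) ≤ 1/2 := (div_le_iff₀ h2u).mpr (by linarith)
    constructor <;> linarith

lemma main_piece (hΦ : ∀ i, IsContractingSimilarity (Φ i) (r i))
    {T : Set (List Λ)} (hT : IsTree T) (hTnl : HasNoLeaves T)
    {U : Set (Euc d)} (hU : IsOSCSet Φ U)
    {S : Set (Euc d)} (hSc : IsCompact S) (hSne : S.Nonempty)
    {v : ℕ → List Λ} (hvT : ∀ n, v n ∈ T)
    (hvconv : Tendsto (fun n => hausdorffDist (treeProj Φ (descTree T (v n))) S) atTop (nhds 0))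
    {ψ : Euc d → Euc d} {R : ℝ} (hR : 0 < R) (hψr : IsSimilarityWithRatio ψ R)
    {δ : ℝ}
    (hstep1 : ∀ x : Euc d, infDist x S ≤ δ → infDist (ψ x) (unitCube d) ≤ δ → x ∈ U)
    {t : ℝ} (ht : 0 < t) (ht1 : 4 * t ≤ R)
    (htQ : Real.sqrt d * (2 * t) ≤ δ) (htS : Real.sqrt d * (3 * t) ≤ R * δ)
    {c : Euc d} (hcQ : c ∈ unitCube d)
    {y0 : Euc d} (hy0S : y0 ∈ ψ '' S) (hy0c : ∀ i, |y0 i - c i| ≤ t) :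
    IsMicroset (treeProj Φ T)
      ((fun x => (2*t)⁻¹ • (x - c) + halfVec d) ''
        ({x : Euc d | ∀ i, |x i - c i| ≤ t} ∩ ψ '' S)) := by
  classical
  have hψc : Continuous ψ := sim_continuous hR hψr
  set sd := Real.sqrt d with hsddef
  have hsd : 0 ≤ sd := Real.sqrt_nonneg d
  set half : Euc d := halfVec d with hhalf
  have hhalfi : ∀ i : Fin d, half i = 1/2 := fun i => rfl
  set F := treeProj Φ T with hF
  set K := {x : Euc d | ∀ i, |x i - c i| ≤ t} with hK
  set D := K ∩ ψ '' S with hD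
  set g : Euc d → Euc d := fun x => (2*t)⁻¹ • (x - c) + half with hg
  set Γ : ℕ → Set (Euc d) := fun n => treeProj Φ (descTree T (v n)) with hΓ
  set e : ℕ → ℝ := fun n => hausdorffDist (Γ n) S with he
  set m : ℕ → ℝ := fun n => R * (e n + 1/(n+1)) with hm
  -- basic facts
  have hΓne : ∀ n, (Γ n).Nonempty := fun n => treeProj_nonempty hΦ hT hTnl (hvT n)
  have hΓbd : ∀ n, Bornology.IsBounded (Γ n) := fun n => treeProj_bounded hΦ _
  have hedist : ∀ n, EMetric.hausdorffEdist (Γ n) S ≠ ⊤ := fun n =>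
    Metric.hausdorffEdist_ne_top_of_nonempty_of_bounded (hΓne n) hSne (hΓbd n) hSc.isBounded
  have he0 : ∀ n, 0 ≤ e n := fun n => Metric.hausdorffDist_nonneg
  have hm0 : ∀ n, 0 < m n := fun n => mul_pos hR
    (add_pos_of_nonneg_of_pos (he0 n) (by positivity))
  have hmt : Tendsto m atTop (nhds 0) := by
    rw [hm]
    have h1 : Tendsto (fun n : ℕ => e n + 1/(n+1)) atTop (nhds (0 + 0)) := by
      apply Tendsto.add hvconv
      exact_mod_cast tendsto_one_div_add_atTop_nhds_zero_nat (𝕜 := ℝ)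
    have h2 := h1.const_mul R
    simpa using h2
  obtain ⟨N₀, hN₀⟩ := eventually_atTop.mp (hmt.eventually_lt_const ht)
  have hmN : ∀ n : ℕ, m (n + N₀) ≤ t := fun n => (hN₀ _ (Nat.le_add_left _ _)).le
  -- the approximating objects
  set η : ℕ → Euc d → Euc d := fun n x => (2*(t + m (n+N₀)))⁻¹ • (x - c) + half with hη
  set inw : ℕ → Euc d → Euc d := fun n => Function.invFun (wordMap Φ (v (n + N₀))) with hinw
  set ψ' : ℕ → Euc d → Euc d := fun n => η n ∘ ψ ∘ (inw n) with hψ'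
  set A : ℕ → Set (Euc d) := fun n => unitCube d ∩ (ψ' n) '' F with hA
  set Wn : ℕ → Set (Euc d) := fun n => {x : Euc d | ∀ i, |x i - c i| ≤ t + m (n+N₀)} with hWn
  set B : ℕ → Set (Euc d) := fun n => Wn n ∩ ψ '' ((inw n) '' F) with hB
  have htm : ∀ n, 0 < t + m (n+N₀) := fun n => by
    have := hm0 (n+N₀); linarith
  have hwrpos : ∀ n, 0 < wordRatio r (v (n+N₀)) := fun n => wordRatio_pos hΦ _
  have hinv : ∀ n, IsSimilarityWithRatio (inw n) (1 / wordRatio r (v (n+N₀)))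
      ∧ (∀ x, wordMap Φ (v (n+N₀)) (inw n x) = x)
      ∧ (∀ x, inw n (wordMap Φ (v (n+N₀)) x) = x) := fun n =>
    sim_inv (hwrpos n) (wordMap_ratio hΦ _)
  have hηsim : ∀ n, IsSimilarityWithRatio (η n) (2*(t + m (n+N₀)))⁻¹ := by
    intro n
    have h := htm n
    exact affine_sim _ (by positivity) c half
  have hgsim : IsSimilarityWithRatio g (2*t)⁻¹ := affine_sim _ (by positivity) c half
  -- window characterization
  have hwin : ∀ n (x : Euc d), η n x ∈ unitCube d ↔ x ∈ Wn n := by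
    intro n x
    constructor
    · intro h i
      have h1 := h i
      rw [hη] at h1
      simp only at h1
      rw [affine_apply, hhalfi] at h1
      exact (window_iff (htm n)).mp h1
    · intro h i
      rw [hη]
      simp only
      rw [affine_apply, hhalfi]
      exact (window_iff (htm n)).mpr (h i)
  -- A n = η n '' B n
  have hAB : ∀ n, A n = η n '' B n := by
    intro n
    rw [hA, hB]
    simp only
    have himg : (ψ' n) '' F = η n '' (ψ '' ((inw n) '' F)) := by
      rw [hψ']
      simp only
      rw [Set.image_comp (η n) (ψ ∘ inw n), Set.image_comp ψ (inw n)]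
    rw [himg]
    ext z
    constructor
    · rintro ⟨hzQ, x, hx, rfl⟩
      exact ⟨x, ⟨(hwin n x).mp hzQ, hx⟩, rfl⟩
    · rintro ⟨x, ⟨hxW, hx⟩, rfl⟩
      exact ⟨(hwin n x).mpr hxW, x, hx, rfl⟩
  -- Γ (n+N₀) ⊆ inw n '' F
  have hΓsub : ∀ n, Γ (n+N₀) ⊆ (inw n) '' F := by
    intro n z hz
    refine ⟨wordMap Φ (v (n+N₀)) z, ?_, (hinv n).2.2 z⟩
    exact wordMap_image_treeProj hΦ hT (hvT (n+N₀)) hz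
  -- no junk: B n ⊆ ψ '' Γ (n+N₀)
  have hjunk : ∀ n, B n ⊆ ψ '' (Γ (n+N₀)) := by
    intro n q hq
    obtain ⟨hqW, x, ⟨z, hzF, hxz⟩, hqx⟩ := hq
    obtain ⟨s0, hs0S, hs0⟩ := hy0S
    have hdyc : ∀ i : Fin d, |q i - c i| ≤ 2*t := by
      intro i
      have h1 := hqW i
      have h2 := hmN n
      linarith
    have hxU : x ∈ U := by
      apply hstep1
      · -- infDist x S ≤ δ
        have hdyy0 : dist q y0 ≤ sd * (3*t) := by
          apply dist_le_sqrt_mul _ _ (by positivity)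
          intro i
          have h1 := hdyc i
          have h2 := hy0c i
          have h3 : |q i - y0 i| ≤ |q i - c i| + |y0 i - c i| := by
            have h4 : q i - y0 i = (q i - c i) - (y0 i - c i) := by ring
            rw [h4]
            exact abs_sub _ _
          linarith
        have hdist : R * dist x s0 ≤ R * δ := by
          rw [← hψr x s0, hqx, hs0]
          exact le_trans hdyy0 htS
        have h5 : dist x s0 ≤ δ := le_of_mul_le_mul_left hdist hR
        exact le_trans (Metric.infDist_le_dist_of_mem hs0S) h5
      · -- infDist (ψ x) Q ≤ δ
        rw [hqx]
        have hdc : dist q c ≤ sd * (2*t) :=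
          dist_le_sqrt_mul _ _ (by positivity) hdyc
        exact le_trans (Metric.infDist_le_dist_of_mem hcQ) (le_trans hdc htQ)
    obtain ⟨i, hiT, hiz⟩ := hzF
    have hwx : wordMap Φ (v (n+N₀)) x = codeMap Φ i := by
      rw [← hxz, (hinv n).2.1 z, ← hiz]
    have hxΓ : x ∈ Γ (n+N₀) := sep_lemma hΦ hT hU (hvT (n+N₀)) hiT hwx hxU
    exact ⟨x, hxΓ, hqx⟩
  -- approximation from D into B n
  have happrox : ∀ n, ∀ p ∈ D, ∃ q ∈ B n, dist p q ≤ m (n+N₀) := by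
    intro n p hp
    obtain ⟨hpK, s, hsS, hsp⟩ := hp
    have h2 : infDist s (Γ (n+N₀)) < e (n+N₀) + 1/((n+N₀:ℕ)+1) := by
      have h1 : infDist s (Γ (n+N₀)) ≤ e (n+N₀) := by
        rw [he]
        simp only
        rw [Metric.hausdorffDist_comm]
        exact Metric.infDist_le_hausdorffDist_of_mem hsS
          (by rw [EMetric.hausdorffEdist_comm]; exact hedist (n+N₀))
      have h6 : (0:ℝ) < 1/((n+N₀:ℕ)+1) := by positivity
      linarith
    obtain ⟨x, hxΓ, hdx⟩ := (Metric.infDist_lt_iff (hΓne (n+N₀))).mp h2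
    have hmval : m (n+N₀) = R * (e (n+N₀) + 1/((n+N₀:ℕ)+1)) := rfl
    have hdq : dist p (ψ x) ≤ m (n+N₀) := by
      rw [← hsp, hψr, hmval]
      apply mul_le_mul_of_nonneg_left hdx.le hR.le
    refine ⟨ψ x, ⟨?_, x, hΓsub n hxΓ, rfl⟩, hdq⟩
    intro i
    have hco : |ψ x i - p i| ≤ dist (ψ x) p := coord_abs_le_dist _ _ i
    rw [dist_comm] at hco
    have hpc := hpK i
    have h7 : |ψ x i - c i| ≤ |ψ x i - p i| + |p i - c i| := by
      have h8 : ψ x i - c i = (ψ x i - p i) + (p i - c i) := by ring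
      rw [h8]
      exact abs_add_le _ _
    have h9 : |ψ x i - p i| = |p i - ψ x i| := abs_sub_comm _ _
    linarith
  -- D facts
  have hDne : D.Nonempty := ⟨y0, hy0c, hy0S⟩
  have hDcpt : IsCompact D := (hSc.image hψc).inter_left (isClosed_cube c t)
  have hDsub : ∀ z ∈ D, dist z c ≤ sd * t := by
    rintro z ⟨hzK, _⟩
    exact dist_le_sqrt_mul _ _ ht.le hzK
  -- forward eventual claim
  have hforward : ∀ ε : ℝ, 0 < ε → ∀ᶠ n in atTop, ∀ q ∈ B n, infDist q D < ε := by
    intro ε hε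
    by_contra hcon
    rw [Filter.not_eventually] at hcon
    have hfreq : ∃ᶠ n in atTop, ∃ q ∈ B n, ε ≤ infDist q D := by
      apply hcon.mono
      intro n hn
      push_neg at hn
      exact hn
    obtain ⟨φ₁, hφ₁, hsel⟩ := Filter.extraction_of_frequently_atTop hfreq
    choose q hqB hqd using hsel
    have hqball : ∀ k, q k ∈ closedBall c (sd * (2*t)) := by
      intro k
      rw [Metric.mem_closedBall]
      apply dist_le_sqrt_mul _ _ (by positivity)
      intro i
      have h1 := (hqB k).1 i
      have h2 := hmN (φ₁ k)
      linarith
    obtain ⟨qq, _, φ₂, hφ₂, htend2⟩ :=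
      (isCompact_closedBall c (sd*(2*t))).tendsto_subseq hqball
    have hmk : Tendsto (fun k => m (φ₁ (φ₂ k) + N₀)) atTop (nhds 0) := by
      apply hmt.comp
      apply tendsto_atTop_mono (fun k => Nat.le_add_right (φ₁ (φ₂ k)) N₀)
      exact (hφ₁.comp hφ₂).tendsto_atTop
    have hqqK : qq ∈ K := by
      intro i
      have hcoord : Tendsto (fun k => |q (φ₂ k) i - c i|) atTop (nhds (|qq i - c i|)) := by
        have h1 : Tendsto (fun k => (q (φ₂ k)) i) atTop (nhds (qq i)) :=
          ((coord_continuous i).tendsto qq).comp htend2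
        exact (h1.sub tendsto_const_nhds).abs
      have hbound : ∀ k, |q (φ₂ k) i - c i| ≤ t + m (φ₁ (φ₂ k) + N₀) :=
        fun k => (hqB (φ₂ k)).1 i
      have hlim : Tendsto (fun k => t + m (φ₁ (φ₂ k) + N₀)) atTop (nhds (t + 0)) :=
        tendsto_const_nhds.add hmk
      have h2 := le_of_tendsto_of_tendsto' hcoord hlim hbound
      simpa using h2
    have hqqS : qq ∈ ψ '' S := by
      choose x hxΓ hxq using fun k => hjunk _ (hqB (φ₂ k))
      have hs : ∀ k, ∃ s ∈ S,
          dist (x k) s < e (φ₁ (φ₂ k) + N₀) + 1/(((φ₁ (φ₂ k) + N₀ : ℕ):ℝ)+1) := by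
        intro k
        have h1 : infDist (x k) S ≤ e (φ₁ (φ₂ k) + N₀) :=
          Metric.infDist_le_hausdorffDist_of_mem (hxΓ k) (hedist _)
        have h6 : (0:ℝ) < 1/(((φ₁ (φ₂ k) + N₀ : ℕ):ℝ)+1) := by positivity
        exact (Metric.infDist_lt_iff hSne).mp (by linarith)
      choose s hsS hsd2 using hs
      have hdistq : ∀ k, dist (ψ (s k)) (q (φ₂ k)) ≤ m (φ₁ (φ₂ k) + N₀) := by
        intro k
        rw [← hxq k, hψr]
        have hmval : m (φ₁ (φ₂ k) + N₀)
            = R * (e (φ₁ (φ₂ k) + N₀) + 1/(((φ₁ (φ₂ k) + N₀ : ℕ):ℝ)+1)) := rfl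
        rw [hmval]
        apply mul_le_mul_of_nonneg_left _ hR.le
        rw [dist_comm]
        exact (hsd2 k).le
      have htends : Tendsto (fun k => ψ (s k)) atTop (nhds qq) := by
        rw [tendsto_iff_dist_tendsto_zero]
        apply squeeze_zero (fun k => dist_nonneg)
          (g := fun k => m (φ₁ (φ₂ k) + N₀) + dist (q (φ₂ k)) qq)
        · intro k
          calc dist (ψ (s k)) qq ≤ dist (ψ (s k)) (q (φ₂ k)) + dist (q (φ₂ k)) qq :=
                dist_triangle _ _ _
            _ ≤ m (φ₁ (φ₂ k) + N₀) + dist (q (φ₂ k)) qq :=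
                add_le_add_left (hdistq k) _
        · have h3 := tendsto_iff_dist_tendsto_zero.mp htend2
          simpa using hmk.add h3
      exact ((hSc.image hψc).isClosed).mem_of_tendsto htends
        (Filter.Eventually.of_forall (fun k => ⟨s k, hsS k, rfl⟩))
    have hqqD : qq ∈ D := ⟨hqqK, hqqS⟩
    have hlim0 : Tendsto (fun k => infDist (q (φ₂ k)) D) atTop (nhds (infDist qq D)) :=
      ((Metric.continuous_infDist_pt D).tendsto qq).comp htend2
    have hge : ε ≤ infDist qq D :=
      le_of_tendsto_of_tendsto' tendsto_const_nhds hlim0 (fun k => hqd (φ₂ k))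
    rw [Metric.infDist_zero_of_mem hqqD] at hge
    linarith
  -- target set
  set Ay := g '' D with hAy
  have hβle : ∀ n, (2*(t + m (n+N₀)))⁻¹ ≤ (2*t)⁻¹ := by
    intro n
    have h1 := hm0 (n+N₀)
    rw [← one_div, ← one_div]
    apply one_div_le_one_div_of_le (by positivity)
    linarith
  have hηg : ∀ n, ∀ z ∈ D, dist (η n z) (g z) ≤ sd * m (n+N₀) / (2*t) := by
    intro n z hz
    have hmn := hm0 (n+N₀)
    have hzc : ‖z - c‖ ≤ sd * t := by
      rw [← dist_eq_norm]
      exact hDsub z hz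
    have hdiff : η n z - g z = ((2*(t + m (n+N₀)))⁻¹ - (2*t)⁻¹) • (z - c) := by
      show ((2*(t + m (n+N₀)))⁻¹ • (z - c) + half) - ((2*t)⁻¹ • (z - c) + half)
          = ((2*(t + m (n+N₀)))⁻¹ - (2*t)⁻¹) • (z - c)
      rw [sub_smul]
      abel
    rw [dist_eq_norm, hdiff, norm_smul, Real.norm_eq_abs]
    have key : (2*t)⁻¹ - (2*(t + m (n+N₀)))⁻¹
        = m (n+N₀) / ((2*t)*(t + m (n+N₀))) := by
      rw [eq_div_iff (by positivity)]
      field_simp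
      ring
    have habs : |(2*(t + m (n+N₀)))⁻¹ - (2*t)⁻¹| ≤ m (n+N₀) / (2*t*t) := by
      rw [abs_sub_comm, abs_of_nonneg (by linarith [hβle n] :
        (0:ℝ) ≤ (2*t)⁻¹ - (2*(t + m (n+N₀)))⁻¹), key]
      apply div_le_div_of_nonneg_left hmn.le (by positivity)
      nlinarith
    calc |(2*(t + m (n+N₀)))⁻¹ - (2*t)⁻¹| * ‖z - c‖
        ≤ (m (n+N₀) / (2*t*t)) * (sd * t) := by
          apply mul_le_mul habs hzc (norm_nonneg _) (by positivity)
      _ = sd * m (n+N₀) / (2*t) := by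
          field_simp
  -- the Hausdorff convergence
  have hmshift : Tendsto (fun n => m (n+N₀)) atTop (nhds 0) :=
    hmt.comp (tendsto_add_atTop_nat N₀)
  have htendA : Tendsto (fun n => hausdorffDist (A n) Ay) atTop (nhds 0) := by
    have hev : ∀ ε : ℝ, 0 < ε → ∀ᶠ n in atTop, hausdorffDist (A n) Ay < ε := by
      intro ε hε
      have hf := hforward (t*ε/2) (by positivity)
      have herrt : Tendsto (fun n => sd * m (n+N₀) / (2*t)) atTop (nhds 0) := by
        have h1 := (hmshift.const_mul sd).div_const (2*t)
        simpa using h1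
      have herr : ∀ᶠ n in atTop, sd * m (n+N₀) / (2*t) < ε/4 :=
        herrt.eventually_lt_const (by positivity)
      have herr2t : Tendsto (fun n => m (n+N₀) / (2*t)) atTop (nhds 0) := by
        have h1 := hmshift.div_const (2*t)
        simpa using h1
      have herr2 : ∀ᶠ n in atTop, m (n+N₀) / (2*t) < ε/4 :=
        herr2t.eventually_lt_const (by positivity)
      filter_upwards [hf, herr, herr2] with n hfn herrn herr2n
      have hle : hausdorffDist (A n) Ay ≤ ε/2 := by
        apply Metric.hausdorffDist_le_of_mem_dist (by positivity)
        · intro u hu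
          rw [hAB n] at hu
          obtain ⟨p, hpB, rfl⟩ := hu
          obtain ⟨z, hzD, hdz⟩ := (Metric.infDist_lt_iff hDne).mp (hfn p hpB)
          refine ⟨g z, ⟨z, hzD, rfl⟩, ?_⟩
          have hd1 : dist (η n p) (η n z) = (2*(t + m (n+N₀)))⁻¹ * dist p z :=
            hηsim n p z
          have hd2 : (2*(t + m (n+N₀)))⁻¹ * dist p z ≤ (2*t)⁻¹ * (t*ε/2) :=
            mul_le_mul (hβle n) hdz.le dist_nonneg (by positivity)
          have hd3 : (2*t)⁻¹ * (t*ε/2) = ε/4 := by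
            field_simp
            ring
          calc dist (η n p) (g z) ≤ dist (η n p) (η n z) + dist (η n z) (g z) :=
                dist_triangle _ _ _
            _ ≤ ε/4 + (ε/4) := by
                apply add_le_add
                · rw [hd1]
                  rw [hd3] at hd2
                  exact hd2
                · exact le_trans (hηg n z hzD) herrn.le
            _ = ε/2 := by ring
        · intro w hw
          obtain ⟨z, hzD, rfl⟩ := hw
          obtain ⟨p, hpB, hdp⟩ := happrox n z hzD
          refine ⟨η n p, by rw [hAB n]; exact ⟨p, hpB, rfl⟩, ?_⟩
          have hd1 : dist (η n z) (η n p) = (2*(t + m (n+N₀)))⁻¹ * dist z p :=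
            hηsim n z p
          have hd2 : (2*(t + m (n+N₀)))⁻¹ * dist z p ≤ (2*t)⁻¹ * m (n+N₀) := by
            apply mul_le_mul (hβle n) hdp dist_nonneg (by positivity)
          calc dist (g z) (η n p) ≤ dist (g z) (η n z) + dist (η n z) (η n p) :=
                dist_triangle _ _ _
            _ ≤ ε/4 + ε/4 := by
                apply add_le_add
                · rw [dist_comm]
                  exact le_trans (hηg n z hzD) herrn.le
                · rw [hd1]
                  apply le_trans hd2
                  rw [inv_mul_eq_div]
                  exact herr2n.le
            _ = ε/2 := by ring
      linarith
    rw [Metric.tendsto_atTop]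
    intro ε hε
    obtain ⟨N, hN⟩ := eventually_atTop.mp (hev ε hε)
    refine ⟨N, fun n hn => ?_⟩
    rw [Real.dist_eq, sub_zero, abs_of_nonneg Metric.hausdorffDist_nonneg]
    exact hN n hn
  -- each A n is a miniset of F
  have hmini : ∀ n, IsMiniset F (A n) := by
    intro n
    constructor
    · obtain ⟨p, hpB, _⟩ := happrox n y0 ⟨hy0c, hy0S⟩
      exact ⟨η n p, by rw [hAB n]; exact ⟨p, hpB, rfl⟩⟩
    · refine ⟨ψ' n, ⟨(2*(t + m (n+N₀)))⁻¹ * (R * (1/wordRatio r (v (n+N₀)))), ?_, ?_⟩, rfl⟩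
      · -- expanding
        have hwr1 : wordRatio r (v (n+N₀)) ≤ 1 := wordRatio_le_one hΦ _
        have hwrp := hwrpos n
        have h1 : (1:ℝ) ≤ 1 / wordRatio r (v (n+N₀)) := by
          rw [le_div_iff₀ hwrp, one_mul]
          exact hwr1
        have h2 : R ≤ R * (1/wordRatio r (v (n+N₀))) := by
          calc R = R * 1 := by ring
            _ ≤ R * (1/wordRatio r (v (n+N₀))) :=
              mul_le_mul_of_nonneg_left h1 hR.le
        have h3 : (4*t)⁻¹ ≤ (2*(t + m (n+N₀)))⁻¹ := by
          rw [← one_div, ← one_div]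
          apply one_div_le_one_div_of_le (by have := hm0 (n+N₀); positivity)
          have := hmN n
          linarith
        have h4 : (1:ℝ) ≤ (4*t)⁻¹ * R := by
          rw [inv_mul_eq_div, le_div_iff₀ (by positivity), one_mul]
          exact ht1
        calc (1:ℝ) ≤ (4*t)⁻¹ * R := h4
          _ ≤ (2*(t + m (n+N₀)))⁻¹ * (R * (1/wordRatio r (v (n+N₀)))) := by
              apply mul_le_mul h3 h2 hR.le
              have := hm0 (n+N₀)
              positivity
      · -- similarity
        have h1 : IsSimilarityWithRatio (ψ ∘ inw n) (R * (1/wordRatio r (v (n+N₀)))) :=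
          sim_comp hψr (hinv n).1
        exact sim_comp (hηsim n) h1
  -- conclusion
  refine ⟨hDcpt.image (sim_continuous (by positivity) hgsim), ?_, A, hmini, htendA⟩
  exact ⟨g y0, ⟨y0, ⟨hy0c, hy0S⟩, rfl⟩⟩

end Aux

theorem stmt12 {d : ℕ} {Λ : Type} [Fintype Λ] [Nonempty Λ]
    (Φ : Λ → Euc d → Euc d) (r : Λ → ℝ)
    (hΦ : ∀ i, IsContractingSimilarity (Φ i) (r i))
    (hOSC : SatisfiesOSC Φ)
    (F : Set (Euc d)) (hFc : IsCompact F) (hFne : F.Nonempty)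
    (T : Set (List Λ)) (hT : IsTree T) (hTnl : HasNoLeaves T)
    (hFT : F = treeProj Φ T) :
    ∀ (S U : Set (Euc d)) (ψ : Euc d → Euc d),
      inClosureBranchSets Φ T S → IsSimilarity ψ → IsOSCSet Φ U →
      ψ ⁻¹' unitCube d ∩ S ⊆ U →
      ∃ (k : ℕ) (A : Fin k → Set (Euc d)) (χ : Fin k → Euc d → Euc d),
        (∀ j, IsMicroset F (A j)) ∧ (∀ j, IsSimilarity (χ j)) ∧
        unitCube d ∩ ψ '' S = ⋃ j, χ j '' A j := by
  classical
  intro S U ψ hS hψ hUosc hW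
  obtain ⟨R, hR, hψr⟩ := hψ
  obtain ⟨hSc, hSne, v, hvT, hvconv⟩ := hS
  by_cases hCne : (unitCube d ∩ ψ '' S).Nonempty
  case neg =>
    refine ⟨0, fun _ => ∅, fun _ => id, fun j => j.elim0, fun j => j.elim0, ?_⟩
    rw [Set.not_nonempty_iff_eq_empty] at hCne
    rw [hCne]
    exact (Set.iUnion_of_empty _).symm
  case pos =>
  have hψc : Continuous ψ := Aux.sim_continuous hR hψr
  obtain ⟨δ, hδ, hstep1⟩ := Aux.step1 hSc hSne hUosc.2.1 hψc hW
  set sd := Real.sqrt d with hsddef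
  have hsd : 0 ≤ sd := Real.sqrt_nonneg d
  set t : ℝ := min (R/4) (min (δ/(4*(sd+1))) (min (R*δ/(4*(sd+1))) (1/2))) with htdef
  have ht : 0 < t := by
    apply lt_min (by positivity)
    apply lt_min (by positivity)
    exact lt_min (by positivity) (by norm_num)
  have ht1 : 4 * t ≤ R := by
    have := min_le_left (R/4) (min (δ/(4*(sd+1))) (min (R*δ/(4*(sd+1))) (1/2)))
    rw [← htdef] at this
    linarith
  have htb : t ≤ δ/(4*(sd+1)) := le_trans (min_le_right _ _) (min_le_left _ _)
  have htc : t ≤ R*δ/(4*(sd+1)) :=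
    le_trans (min_le_right _ _) (le_trans (min_le_right _ _) (min_le_left _ _))
  have ht2 : t ≤ 1/2 :=
    le_trans (min_le_right _ _) (le_trans (min_le_right _ _) (min_le_right _ _))
  have htb' : t * (4*(sd+1)) ≤ δ := by
    rw [← le_div_iff₀ (by positivity)]
    exact htb
  have htc' : t * (4*(sd+1)) ≤ R*δ := by
    rw [← le_div_iff₀ (by positivity)]
    exact htc
  have htQ : sd * (2*t) ≤ δ := by nlinarith
  have htS : sd * (3*t) ≤ R*δ := by nlinarith
  have hCcpt : IsCompact (unitCube d ∩ ψ '' S) :=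
    (hSc.image hψc).inter_left Aux.isClosed_unitCube
  obtain ⟨Y, hYC, hYcov⟩ := hCcpt.elim_nhds_subcover (fun y => ball y (t/2))
    (fun y _ => ball_mem_nhds y (by positivity))
  set ctr : Euc d → Euc d := fun y => (WithLp.toLp 2 (fun i => max t (min (y i) (1 - t))) : Euc d) with hctr
  have hctri : ∀ y (i : Fin d), ctr y i = max t (min (y i) (1 - t)) := fun y i => rfl
  set piece : Euc d → Set (Euc d) :=
    fun y => {x : Euc d | ∀ i, |x i - ctr y i| ≤ t} ∩ ψ '' S with hpiece
  set gmap : Euc d → Euc d → Euc d :=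
    fun y x => (2*t)⁻¹ • (x - ctr y) + Aux.halfVec d with hgmap
  set chi : Euc d → Euc d → Euc d :=
    fun y x => (2*t) • (x - Aux.halfVec d) + ctr y with hchi
  have hctrQ : ∀ y, ctr y ∈ unitCube d := by
    intro y i
    rw [hctri]
    constructor
    · exact le_trans ht.le (le_max_left _ _)
    · apply max_le (by linarith)
      exact le_trans (min_le_right _ _) (by linarith)
  have hctrle : ∀ y (i : Fin d), ctr y i ≤ 1 - t := by
    intro y i
    rw [hctri]
    apply max_le (by linarith)
    exact min_le_right _ _
  have hctrge : ∀ y (i : Fin d), t ≤ ctr y i := fun y i => le_max_left _ _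
  -- the center of the covering ball is t-close to its cube center
  have hyctr : ∀ y ∈ unitCube d ∩ ψ '' S, ∀ i : Fin d, |y i - ctr y i| ≤ t := by
    rintro y ⟨hyQ, _⟩ i
    have hy0 : 0 ≤ y i := (hyQ i).1
    have hy1 : y i ≤ 1 := (hyQ i).2
    rw [hctri, abs_le]
    by_cases h1 : y i ≤ 1 - t
    · by_cases h2 : t ≤ y i
      · rw [min_eq_left h1, max_eq_right h2]
        constructor <;> linarith
      · push_neg at h2
        rw [min_eq_left h1, max_eq_left h2.le]
        constructor <;> linarith
    · push_neg at h1
      rw [min_eq_right h1.le, max_eq_right (by linarith)]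
      constructor <;> linarith
  -- cubes lie inside Q
  have hKQ : ∀ y (x : Euc d), (∀ i, |x i - ctr y i| ≤ t) → x ∈ unitCube d := by
    intro y x hx i
    have h1 := (abs_le.mp (hx i)).1
    have h2 := (abs_le.mp (hx i)).2
    have h3 := hctrle y i
    have h4 := hctrge y i
    constructor <;> linarith
  -- covering
  have hcov1 : ∀ x ∈ unitCube d ∩ ψ '' S, ∃ y ∈ Y, x ∈ piece y := by
    intro x hx
    have hx' := hYcov hx
    rw [Set.mem_iUnion₂] at hx'
    obtain ⟨y, hyY, hxb⟩ := hx'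
    have hyC := hYC y hyY
    have hyQ : y ∈ unitCube d := hyC.1
    refine ⟨y, hyY, ?_, hx.2⟩
    intro i
    have hxy : |x i - y i| ≤ dist x y := Aux.coord_abs_le_dist x y i
    have hdxy : dist x y < t/2 := mem_ball.mp hxb
    have hy0 : 0 ≤ y i := (hyQ i).1
    have hy1 : y i ≤ 1 := (hyQ i).2
    have hx0 : 0 ≤ x i := (hx.1 i).1
    have hx1 : x i ≤ 1 := (hx.1 i).2
    have habs := abs_le.mp (abs_le.mpr ⟨neg_le_of_abs_le hxy, le_of_abs_le hxy⟩ : |x i - y i| ≤ dist x y)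
    rw [hctri, abs_le]
    by_cases h1 : y i ≤ 1 - t
    · by_cases h2 : t ≤ y i
      · rw [min_eq_left h1, max_eq_right h2]
        constructor <;> linarith [habs.1, habs.2]
      · push_neg at h2
        rw [min_eq_left h1, max_eq_left h2.le]
        constructor <;> linarith [habs.1, habs.2]
    · push_neg at h1
      rw [min_eq_right h1.le, max_eq_right (by linarith)]
      constructor <;> linarith [habs.1, habs.2]
  have hcov2 : ∀ y, piece y ⊆ unitCube d ∩ ψ '' S := by
    rintro y x ⟨hxK, hxS⟩
    exact ⟨hKQ y x hxK, hxS⟩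
  -- indexing
  set k := Y.card with hk
  set σ := Y.equivFin with hσ
  have hchig : ∀ y (z : Euc d), chi y (gmap y z) = z := by
    intro y z
    show (2*t) • (((2*t)⁻¹ • (z - ctr y) + Aux.halfVec d) - Aux.halfVec d) + ctr y = z
    rw [add_sub_cancel_right, smul_smul, mul_inv_cancel₀ (by positivity : (2*t) ≠ 0),
      one_smul, sub_add_cancel]
  have himg : ∀ y, chi y '' (gmap y '' piece y) = piece y := by
    intro y
    rw [← Set.image_comp]
    have h1 : (chi y ∘ gmap y) = id := funext (hchig y)
    rw [h1, Set.image_id]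
  refine ⟨k, fun j => gmap ((σ.symm j : Y) : Euc d) '' piece ((σ.symm j : Y) : Euc d),
    fun j => chi ((σ.symm j : Y) : Euc d), ?_, ?_, ?_⟩
  · intro j
    set y := ((σ.symm j : Y) : Euc d) with hy
    have hyY : y ∈ Y := (σ.symm j).2
    have hyC := hYC y hyY
    rw [hFT]
    exact Aux.main_piece hΦ hT hTnl hUosc hSc hSne hvT hvconv hR hψr hstep1 ht ht1 htQ htS
      (hctrQ y) hyC.2 (hyctr y hyC)
  · intro j
    exact ⟨2*t, by positivity, Aux.affine_sim (2*t) (by positivity) (Aux.halfVec d) _⟩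
  · ext x
    simp only [Set.mem_iUnion]
    constructor
    · intro hx
      obtain ⟨y, hyY, hxp⟩ := hcov1 x hx
      refine ⟨σ ⟨y, hyY⟩, ?_⟩
      rw [himg]
      have h1 : σ.symm (σ ⟨y, hyY⟩) = ⟨y, hyY⟩ := σ.symm_apply_apply _
      rw [h1]
      exact hxp
    · rintro ⟨j, hxj⟩
      rw [himg] at hxj
      exact hcov2 _ hxj
end
end

section
/- Let Φ = {φ_i}_{i∈Λ} be a similarity IFS and let S ∈ 𝒯'_Λ be an infinite tree with no leaves. Then for every miniset M ⊆ Q of Γ_Φ(S) such that M ∩ Q° ≠ ∅, there exist a non-empty set F ∈ S_Φ^S and a similarity map ψ such that ψ(F) ⊆ M ∩ Q°; in particular dim_H(F) ≤ dim_H(M). -/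
open Metric Filter Set
open scoped ENNReal NNReal

noncomputable section

namespace Stmt13Aux

variable {d : ℕ} {Λ : Type}

lemma wordMap_append {X : Type} (Φ : Λ → X → X) (v w : List Λ) (z : X) :
    wordMap Φ (v ++ w) z = wordMap Φ v (wordMap Φ w z) := by
  simp [wordMap, List.foldr_append]

lemma wordMap_dist (Φ : Λ → Euc d → Euc d) (r : Λ → ℝ)
    (hΦ : ∀ i, IsContractingSimilarity (Φ i) (r i)) (w : List Λ) (x y : Euc d) :
    dist (wordMap Φ w x) (wordMap Φ w y) = wordRatio r w * dist x y := by
  induction w with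
  | nil => simp [wordMap, wordRatio]
  | cons a w ih =>
    rw [show wordMap Φ (a::w) x = Φ a (wordMap Φ w x) from rfl,
      show wordMap Φ (a::w) y = Φ a (wordMap Φ w y) from rfl, (hΦ a).2.2, ih]
    simp [wordRatio]; ring

lemma wordRatio_pos (r : Λ → ℝ) (hr : ∀ i, 0 < r i) (w : List Λ) : 0 < wordRatio r w := by
  induction w with
  | nil => simp [wordRatio]
  | cons a w ih => simpa [wordRatio] using mul_pos (hr a) ih

lemma wordRatio_le (r : Λ → ℝ) (hr : ∀ i, 0 < r i) {R : ℝ} (hR : ∀ i, r i ≤ R) (w : List Λ) :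
    wordRatio r w ≤ R ^ w.length := by
  induction w with
  | nil => simp [wordRatio]
  | cons a w ih =>
    have h0 : 0 ≤ R := (hr a).le.trans (hR a)
    have hp := wordRatio_pos r hr w
    simp only [wordRatio, List.map_cons, List.prod_cons, List.length_cons, pow_succ] at *
    nlinarith [pow_nonneg h0 w.length, hR a, hr a]

def seqApp (v : List Λ) (y : ℕ → Λ) : ℕ → Λ :=
  fun n => if h : n < v.length then v[n] else y (n - v.length)

lemma ofFn_seqApp (v : List Λ) (y : ℕ → Λ) {n : ℕ} (hn : v.length = n) (m : ℕ) :
    (List.ofFn fun i : Fin (n + m) => seqApp v y i) = v ++ List.ofFn fun i : Fin m => y i := by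
  apply List.ext_getElem
  · simp [hn]
  · intro i h1 h2
    rw [List.getElem_ofFn, List.getElem_append]
    simp only [seqApp]
    split
    · rfl
    · rw [List.getElem_ofFn]

lemma seqApp_shift (x : ℕ → Λ) (n : ℕ) :
    seqApp (List.ofFn fun i : Fin n => x i) (fun m => x (n + m)) = x := by
  funext k
  simp only [seqApp]
  split
  · next h => rw [List.getElem_ofFn]
  · next h =>
    simp only [List.length_ofFn] at h ⊢
    congr 1
    omega

lemma codeMap_key [Fintype Λ] [Nonempty Λ] (Φ : Λ → Euc d → Euc d) (r : Λ → ℝ)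
    (hΦ : ∀ i, IsContractingSimilarity (Φ i) (r i)) :
    ∃ B : ℝ, 0 ≤ B ∧ ∀ x : ℕ → Λ,
      Tendsto (fun n => wordMap Φ (List.ofFn fun i : Fin n => x i) 0) atTop (nhds (codeMap Φ x))
      ∧ dist (codeMap Φ x) 0 ≤ B := by
  set Rm : ℝ := Finset.univ.sup' Finset.univ_nonempty r with hRm
  have hra : ∀ i, r i ≤ Rm := fun i => Finset.le_sup' r (Finset.mem_univ i)
  have hRm1 : Rm < 1 := (Finset.sup'_lt_iff Finset.univ_nonempty).mpr fun i _ => (hΦ i).2.1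
  have hRm0 : 0 ≤ Rm := le_trans (hΦ (Classical.arbitrary Λ)).1.le (hra _)
  set C : ℝ := Finset.univ.sup' Finset.univ_nonempty (fun i => dist (Φ i 0) 0) with hC
  have hCi : ∀ i, dist (Φ i 0) 0 ≤ C :=
    fun i => by rw [hC]; exact Finset.le_sup' (fun j => dist (Φ j 0) 0) (Finset.mem_univ i)
  refine ⟨C / (1 - Rm), ?_, fun x => ?_⟩
  · have : (0:ℝ) ≤ C := dist_nonneg.trans (hCi (Classical.arbitrary Λ))
    have : (0:ℝ) < 1 - Rm := by linarith
    positivity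
  · set f : ℕ → Euc d := fun n => wordMap Φ (List.ofFn fun i : Fin n => x i) 0 with hf
    have key : ∀ n, dist (f n) (f (n+1)) ≤ C * Rm ^ n := by
      intro n
      have h1 : (List.ofFn fun i : Fin (n+1) => x i) =
          (List.ofFn fun i : Fin n => x i) ++ [x n] := by
        rw [List.ofFn_succ']
        simp [List.concat_eq_append]
      have h2 : f (n+1) = wordMap Φ (List.ofFn fun i : Fin n => x i) (Φ (x n) 0) := by
        rw [hf]
        simp only [h1, wordMap_append]
        rfl
      rw [h2, hf]
      rw [wordMap_dist Φ r hΦ]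
      have hw : wordRatio r (List.ofFn fun i : Fin n => x i) ≤ Rm ^ n := by
        have := wordRatio_le r (fun i => (hΦ i).1) hra (List.ofFn fun i : Fin n => x i)
        simpa using this
      have hd : dist (0 : Euc d) (Φ (x n) 0) ≤ C := by
        rw [dist_comm]; exact hCi (x n)
      calc wordRatio r (List.ofFn fun i : Fin n => x i) * dist (0:Euc d) (Φ (x n) 0)
          ≤ Rm ^ n * C := by
            apply mul_le_mul hw hd dist_nonneg (pow_nonneg hRm0 n)
        _ = C * Rm ^ n := mul_comm _ _
    have hcauchy : CauchySeq f := cauchySeq_of_le_geometric Rm C hRm1 key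
    obtain ⟨a, ha⟩ := cauchySeq_tendsto_of_complete hcauchy
    have hlim : codeMap Φ x = a := ha.limUnder_eq
    refine ⟨hlim ▸ ha, ?_⟩
    have h0 : f 0 = 0 := rfl
    have := dist_le_of_le_geometric_of_tendsto₀ Rm C hRm1 key ha
    rw [h0] at this
    rw [hlim, dist_comm]
    exact this

lemma codeMap_seqApp [Fintype Λ] [Nonempty Λ] (Φ : Λ → Euc d → Euc d) (r : Λ → ℝ)
    (hΦ : ∀ i, IsContractingSimilarity (Φ i) (r i)) (v : List Λ) (y : ℕ → Λ) :
    codeMap Φ (seqApp v y) = wordMap Φ v (codeMap Φ y) := by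
  obtain ⟨B, -, hkey⟩ := codeMap_key Φ r hΦ
  have h1 := (hkey (seqApp v y)).1
  have h2 := (hkey y).1
  have hcont : Continuous (wordMap Φ v) := by
    refine (LipschitzWith.of_dist_le_mul (K := ⟨wordRatio r v,
      (wordRatio_pos r (fun i => (hΦ i).1) v).le⟩) (f := wordMap Φ v) ?_).continuous
    intro a b
    exact le_of_eq (wordMap_dist Φ r hΦ v a b)
  have h3 : Tendsto (fun m => wordMap Φ v (wordMap Φ (List.ofFn fun i : Fin m => y i) 0))
      atTop (nhds (wordMap Φ v (codeMap Φ y))) := (hcont.tendsto _).comp h2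
  have hmono : Tendsto (fun m => v.length + m) atTop atTop :=
    tendsto_atTop_mono (fun m => Nat.le_add_left m v.length) tendsto_id
  have h4 : Tendsto (fun m => wordMap Φ (List.ofFn fun i : Fin (v.length + m) => seqApp v y i) 0)
      atTop (nhds (codeMap Φ (seqApp v y))) := h1.comp hmono
  have h5 : (fun m => wordMap Φ (List.ofFn fun i : Fin (v.length + m) => seqApp v y i) 0)
      = fun m => wordMap Φ v (wordMap Φ (List.ofFn fun i : Fin m => y i) 0) := by
    funext m
    rw [ofFn_seqApp v y rfl m, wordMap_append]
  rw [h5] at h4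
  exact tendsto_nhds_unique h4 h3

end Stmt13Aux

open Stmt13Aux in
theorem stmt13 {d : ℕ} {Λ : Type} [Fintype Λ] [Nonempty Λ]
    (Φ : Λ → Euc d → Euc d) (r : Λ → ℝ)
    (hΦ : ∀ i, IsContractingSimilarity (Φ i) (r i))
    (S : Set (List Λ)) (hS : IsTree S) (hSnl : HasNoLeaves S) :
    ∀ M : Set (Euc d), IsMiniset (treeProj Φ S) M →
      (M ∩ interior (unitCube d)).Nonempty →
      ∃ F : Set (Euc d), F ∈ branchSets Φ S ∧ F.Nonempty ∧
        (∃ ψ : Euc d → Euc d, IsSimilarity ψ ∧ ψ '' F ⊆ M ∩ interior (unitCube d)) ∧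
        dimH F ≤ dimH M := by
  intro M hM hMint
  obtain ⟨hMne, ψ, ⟨R, hR1, hψ⟩, hMeq⟩ := hM
  obtain ⟨p, hpM, hpI⟩ := hMint
  have hR0 : (0:ℝ) < R := lt_of_lt_of_le zero_lt_one hR1
  have hpM' : p ∈ unitCube d ∩ ψ '' treeProj Φ S := hMeq ▸ hpM
  obtain ⟨q, ⟨x, hx, rfl⟩, rfl⟩ := hpM'.2
  obtain ⟨ε, hε, hball⟩ := Metric.isOpen_iff.1 isOpen_interior _ hpI
  obtain ⟨B, hB0, hkey⟩ := codeMap_key Φ r hΦ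
  set Rm : ℝ := Finset.univ.sup' Finset.univ_nonempty r with hRmdef
  have hra : ∀ i, r i ≤ Rm := fun i => Finset.le_sup' r (Finset.mem_univ i)
  have hRm1 : Rm < 1 := (Finset.sup'_lt_iff Finset.univ_nonempty).mpr fun i _ => (hΦ i).2.1
  have hRm0 : 0 ≤ Rm := le_trans (hΦ (Classical.arbitrary Λ)).1.le (hra _)
  have hpos : (0:ℝ) < R * (2 * B + 1) := by nlinarith
  obtain ⟨n, hn⟩ := exists_pow_lt_of_lt_one (div_pos hε hpos) hRm1
  have hn' : R * Rm ^ n * (2 * B + 1) < ε := by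
    have := (lt_div_iff₀ hpos).mp hn
    nlinarith
  have hrpos : ∀ i, 0 < r i := fun i => (hΦ i).1
  set v : List Λ := List.ofFn fun i : Fin n => x i with hvdef
  have hvlen : v.length = n := by rw [hvdef]; exact List.length_ofFn
  have hvS : v ∈ S := hx n
  have hshift : seqApp v (fun m => x (n + m)) = x := seqApp_shift x n
  have hy0 : (fun m => x (n + m)) ∈ treeBoundary (descTree S v) := by
    intro m
    show v ++ _ ∈ S
    rw [← ofFn_seqApp v (fun m => x (n + m)) hvlen m, hshift]
    exact hx (n + m)
  have hp : codeMap Φ x = wordMap Φ v (codeMap Φ (fun m => x (n + m))) := by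
    conv_lhs => rw [← hshift]
    exact codeMap_seqApp Φ r hΦ v _
  have hwrpos : 0 < wordRatio r v := wordRatio_pos r hrpos v
  have hwrle : wordRatio r v ≤ Rm ^ n := by
    have := wordRatio_le r hrpos hra v
    rwa [hvlen] at this
  have hψ' : IsSimilarityWithRatio (fun z => ψ (wordMap Φ v z)) (R * wordRatio r v) := by
    intro a b
    rw [hψ, wordMap_dist Φ r hΦ, mul_assoc]
  -- membership of seqApp v y in the tree boundary, for y in the boundary of the descendant tree
  have hbdy : ∀ y ∈ treeBoundary (descTree S v), seqApp v y ∈ treeBoundary S := by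
    intro y hy k
    rcases le_or_gt k n with hk | hk
    · have heq : (List.ofFn fun i : Fin k => seqApp v y i) = List.ofFn fun i : Fin k => x i := by
        apply congrArg List.ofFn
        funext i
        have hi : (i : ℕ) < v.length := by rw [hvlen]; omega
        show seqApp v y i = x i
        simp only [seqApp, dif_pos hi]
        simp only [hvdef, List.getElem_ofFn]
      rw [heq]
      exact hx k
    · obtain ⟨m, rfl⟩ : ∃ m, k = n + m := ⟨k - n, by omega⟩
      rw [ofFn_seqApp v y hvlen m]
      exact hy m
  -- the image is inside the ball, hence inside M ∩ interior Q
  have hsub : (fun z => ψ (wordMap Φ v z)) '' treeProj Φ (descTree S v)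
      ⊆ M ∩ interior (unitCube d) := by
    rintro w ⟨q, ⟨y, hy, rfl⟩, rfl⟩
    have hin : ψ (wordMap Φ v (codeMap Φ y)) ∈ ball (ψ (codeMap Φ x)) ε := by
      rw [mem_ball, hp]
      have h1 := hψ' (codeMap Φ y) (codeMap Φ (fun m => x (n + m)))
      have hd : dist (codeMap Φ y) (codeMap Φ (fun m => x (n + m))) ≤ 2 * B := by
        have hb1 := (hkey y).2
        have hb2 := (hkey (fun m => x (n + m))).2
        calc dist (codeMap Φ y) (codeMap Φ (fun m => x (n + m)))
            ≤ dist (codeMap Φ y) 0 + dist (0 : Euc d) (codeMap Φ (fun m => x (n + m))) :=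
              dist_triangle _ _ _
          _ ≤ 2 * B := by rw [dist_comm (0 : Euc d)]; linarith
      calc dist (ψ (wordMap Φ v (codeMap Φ y)))
            (ψ (wordMap Φ v (codeMap Φ (fun m => x (n + m)))))
          = (R * wordRatio r v) * dist (codeMap Φ y) (codeMap Φ (fun m => x (n + m))) := h1
        _ ≤ (R * Rm ^ n) * (2 * B + 1) := by
            apply mul_le_mul
            · exact mul_le_mul_of_nonneg_left hwrle hR0.le
            · linarith
            · exact dist_nonneg
            · exact mul_nonneg hR0.le (pow_nonneg hRm0 n)
        _ < ε := hn'
    have hint : ψ (wordMap Φ v (codeMap Φ y)) ∈ interior (unitCube d) := hball hin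
    refine ⟨?_, hint⟩
    rw [hMeq]
    exact ⟨interior_subset hint,
      codeMap Φ (seqApp v y), ⟨seqApp v y, hbdy y hy, rfl⟩,
      by rw [codeMap_seqApp Φ r hΦ v y]⟩
  refine ⟨treeProj Φ (descTree S v), ⟨v, hvS, rfl⟩,
    ⟨codeMap Φ (fun m => x (n + m)), ⟨_, hy0, rfl⟩⟩,
    ⟨fun z => ψ (wordMap Φ v z), ⟨R * wordRatio r v, by positivity, hψ'⟩, hsub⟩, ?_⟩
  -- dimension inequality
  have hanti : AntilipschitzWith ⟨(R * wordRatio r v)⁻¹, by positivity⟩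
      (fun z => ψ (wordMap Φ v z)) := by
    apply AntilipschitzWith.of_le_mul_dist
    intro a b
    have h1 := hψ' a b
    have hs : (0:ℝ) < R * wordRatio r v := by positivity
    change dist a b ≤ (R * wordRatio r v)⁻¹ * dist (ψ (wordMap Φ v a)) (ψ (wordMap Φ v b))
    rw [h1, ← mul_assoc, inv_mul_cancel₀ hs.ne', one_mul]
  calc dimH (treeProj Φ (descTree S v))
      ≤ dimH ((fun z => ψ (wordMap Φ v z)) '' treeProj Φ (descTree S v)) :=
        hanti.le_dimH_image _
    _ ≤ dimH M := dimH_mono (hsub.trans inter_subset_left)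
end
end
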